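/- Let G1 and G2 be 3-regular simple graphs, let k ≥ 1, and let x1 : E(G1) → {1,…,k} and x2 : E(G2) → {1,…,k} be edge labelings. Let G1' = gadget(G1, x1) and G2' = gadget(G2, x2) be the respective gadgeted graphs. If G1' and G2' are isomorphic as graphs, then there is a graph isomorphism φ : G1 → G2 such that x2({φ(u),φ(v)}) = x1({u,v}) for every edge {u,v} of G1; i.e., (G1, x1) and (G2, x2) are isomorphic as edge-labeled graphs. -/

import Mathlib

open scoped ENNReal

namespace LCLGadget

/-- Adjacency relation (one direction) of the A-gadget, on vertex indices `0,…,5`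
representing the paper's vertices `1,…,6`. -/
def AAdj (i j : Fin 6) : Prop :=
  (i, j) ∈ ([(0,1),(0,2),(1,2),(1,3),(2,4),(3,4),(3,5),(4,5)] : List (Fin 6 × Fin 6))

variable {V : Type} [LinearOrder V]

/-- The gadget vertices of the gadgeted graph `gadget(G, x)`: a vertex `⟨(a,b,i,j), _⟩`
is vertex `j` of the `i`-th A-gadget on the expanded edge replacing the edge `{a,b}`
(oriented so that `a < b`). -/
abbrev GadgetAux (G : SimpleGraph V) (x : Sym2 V → ℕ) : Type :=
  {p : V × V × ℕ × Fin 6 //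
    p.1 < p.2.1 ∧ G.Adj p.1 p.2.1 ∧ p.2.2.1 < x s(p.1, p.2.1)}

/-- Vertices of the gadgeted graph: original vertices (`Sum.inl`) and gadget
vertices (`Sum.inr`). -/
abbrev GadgetVert (G : SimpleGraph V) (x : Sym2 V → ℕ) : Type :=
  V ⊕ GadgetAux G x

/-- Base adjacency relation of the gadgeted graph (to be symmetrized):
vertex `0` (paper's `1`) of the first gadget is joined to the smaller endpoint,
vertex `5` (paper's `6`) of the last gadget is joined to the larger endpoint,
within one gadget the A-gadget edges are used, and consecutive gadgets of a chain
are joined by an edge from vertex `5` to vertex `0`. -/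
def gadgetRel (G : SimpleGraph V) (x : Sym2 V → ℕ) :
    GadgetVert G x → GadgetVert G x → Prop
  | Sum.inl sv, Sum.inr ⟨⟨a, b, i, j⟩, _⟩ =>
      (sv = a ∧ i = 0 ∧ j = 0) ∨ (sv = b ∧ i = x s(a, b) - 1 ∧ j = 5)
  | Sum.inr ⟨⟨a, b, i, j⟩, _⟩, Sum.inr ⟨⟨a', b', i', j'⟩, _⟩ =>
      a = a' ∧ b = b' ∧ ((i = i' ∧ AAdj j j') ∨ (i' = i + 1 ∧ j = 5 ∧ j' = 0))
  | _, _ => False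

/-- The gadgeted graph `G' = gadget(G, x)`. -/
def gadgetGraph (G : SimpleGraph V) (x : Sym2 V → ℕ) : SimpleGraph (GadgetVert G x) :=
  SimpleGraph.fromRel (gadgetRel G x)

/-- Weight of a (potential) edge of the gadgeted graph: `1/2` if it is incident to an
original vertex, `0` otherwise. -/
noncomputable def wt (G : SimpleGraph V) (x : Sym2 V → ℕ) :
    GadgetVert G x → GadgetVert G x → ℝ≥0∞
  | Sum.inl _, _ => 1/2
  | _, Sum.inl _ => 1/2
  | _, _ => 0

/-- The gadgeted distance `gdist(u,v)`: the minimum total weight of a path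
from `u` to `v` in the gadgeted graph. -/
noncomputable def gdist (G : SimpleGraph V) (x : Sym2 V → ℕ) (u v : GadgetVert G x) : ℝ≥0∞ :=
  ⨅ p : (gadgetGraph G x).Walk u v,
    (p.darts.map fun d => wt G x d.toProd.1 d.toProd.2).sum

/-- Membership of a vertex `u` in the `r`-gball around `c`. -/
def inGball (G : SimpleGraph V) (x : Sym2 V → ℕ) (r : ℕ) (c u : GadgetVert G x) : Prop :=
  gdist G x c u ≤ (r : ℝ≥0∞)

/-- `u` is an original vertex of the gadgeted graph. -/
def IsOriginal (G : SimpleGraph V) (x : Sym2 V → ℕ) (u : GadgetVert G x) : Prop :=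
  ∃ v : V, u = Sum.inl v

/-- `u` is an outer vertex: a gadget vertex adjacent to an original vertex. -/
def IsOuter (G : SimpleGraph V) (x : Sym2 V → ℕ) (u : GadgetVert G x) : Prop :=
  (∃ p, u = Sum.inr p) ∧ ∃ w, IsOriginal G x w ∧ (gadgetGraph G x).Adj u w

/-- `u` is an inner vertex: a gadget vertex not adjacent to any original vertex. -/
def IsInner (G : SimpleGraph V) (x : Sym2 V → ℕ) (u : GadgetVert G x) : Prop :=
  (∃ p, u = Sum.inr p) ∧ ¬ ∃ w, IsOriginal G x w ∧ (gadgetGraph G x).Adj u w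

/-- `G` is a 3-regular graph. -/
def ThreeRegular (G : SimpleGraph V) : Prop :=
  ∀ v : V, (G.neighborSet v).ncard = 3

/-- The edge labeling `x` takes positive values on all edges. -/
def PosLabels (G : SimpleGraph V) (x : Sym2 V → ℕ) : Prop :=
  ∀ e ∈ G.edgeSet, 0 < x e

/-- `x` is a distance-`2r` edge coloring of `G`: any two distinct edges of `G` at
distance at most `2r` from each other receive distinct labels. -/
def DistEdgeColoring (G : SimpleGraph V) (x : Sym2 V → ℕ) (r : ℕ) : Prop :=
  ∀ e ∈ G.edgeSet, ∀ f ∈ G.edgeSet, e ≠ f →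
    (∃ a ∈ e, ∃ b ∈ f, G.edist a b ≤ (2 * r : ℕ)) → x e ≠ x f

/-- The gadgeted graph `gadget(G,x)` is correctly gadgeted for parameter `r`. -/
def CorrectlyGadgeted (G : SimpleGraph V) (x : Sym2 V → ℕ) (r : ℕ) : Prop :=
  ThreeRegular G ∧ PosLabels G x ∧ DistEdgeColoring G x r

/-- `χ` is a distance-2 coloring of the gadgeted graph:
it is injective on `{v} ∪ N(v)` for every vertex `v`. -/
def Dist2Coloring (G : SimpleGraph V) (x : Sym2 V → ℕ) (χ : GadgetVert G x → ℕ) : Prop :=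
  ∀ v : GadgetVert G x, Set.InjOn χ (insert v ((gadgetGraph G x).neighborSet v))

/-- `χ` is edge-consistent in every `r`-gball: whenever `{v,u}` is an edge and
`v' ∈ gball_r(v)` has `χ(v') = χ(v)`, there is a neighbor `u'` of `v'` with
`χ(u') = χ(u)`. -/
def EdgeConsistent (G : SimpleGraph V) (x : Sym2 V → ℕ) (r : ℕ)
    (χ : GadgetVert G x → ℕ) : Prop :=
  ∀ v u : GadgetVert G x, (gadgetGraph G x).Adj v u →
    ∀ v', inGball G x r v v' → χ v' = χ v →
      ∃ u', (gadgetGraph G x).Adj v' u' ∧ χ u' = χ u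

/-- `u` lies on a triangle (cycle of length 3) of the gadgeted graph. -/
def OnTriangle (G : SimpleGraph V) (x : Sym2 V → ℕ) (u : GadgetVert G x) : Prop :=
  ∃ a b, (gadgetGraph G x).Adj u a ∧ (gadgetGraph G x).Adj u b ∧ (gadgetGraph G x).Adj a b

end LCLGadget

namespace LCLGadgetThms
open LCLGadget SimpleGraph

variable {V : Type} [LinearOrder V] {G : SimpleGraph V} {x : Sym2 V → ℕ}

lemma adj_iff {u v : GadgetVert G x} :
    (gadgetGraph G x).Adj u v ↔ u ≠ v ∧ (gadgetRel G x u v ∨ gadgetRel G x v u) :=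
  SimpleGraph.fromRel_adj _ u v

lemma rel_inl_inr {s a b : V} {i : ℕ} {j : Fin 6} {h} :
    gadgetRel G x (Sum.inl s) (Sum.inr ⟨(a,b,i,j), h⟩) ↔
      (s = a ∧ i = 0 ∧ j = 0) ∨ (s = b ∧ i = x s(a,b) - 1 ∧ j = 5) := by
  simp [gadgetRel]

lemma rel_inr_inr {a b a' b' : V} {i i' : ℕ} {j j' : Fin 6} {h h'} :
    gadgetRel G x (Sum.inr ⟨(a,b,i,j), h⟩) (Sum.inr ⟨(a',b',i',j'), h'⟩) ↔
      a = a' ∧ b = b' ∧ ((i = i' ∧ AAdj j j') ∨ (i' = i + 1 ∧ j = 5 ∧ j' = 0)) := by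
  simp [gadgetRel]

lemma rel_inr_inl {a b : V} {i : ℕ} {j : Fin 6} {h} {s : V} :
    ¬ gadgetRel G x (Sum.inr ⟨(a,b,i,j), h⟩) (Sum.inl s) := by
  simp [gadgetRel]

lemma rel_inl_inl {s t : V} : ¬ gadgetRel G x (Sum.inl s) (Sum.inl t) := by
  simp [gadgetRel]

instance instDecAAdj : ∀ j j' : Fin 6, Decidable (AAdj j j') := fun j j' => by
  unfold AAdj; infer_instance

lemma aadj_ne' : ∀ j j' : Fin 6, AAdj j j' → j ≠ j' := by decide

lemma aadj_ne {j j' : Fin 6} (h : AAdj j j') : j ≠ j' := aadj_ne' j j' h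

lemma adj_within {a b : V} {i : ℕ} {j j' : Fin 6} {h h'} (hjj : AAdj j j' ∨ AAdj j' j) :
    (gadgetGraph G x).Adj (Sum.inr ⟨(a,b,i,j), h⟩) (Sum.inr ⟨(a,b,i,j'), h'⟩) := by
  refine adj_iff.mpr ⟨?_, ?_⟩
  · intro hh
    have : j = j' := by
      have := congrArg (fun u => match u with
        | Sum.inr p => p.1.2.2.2
        | Sum.inl _ => j) hh
      simpa using this
    rcases hjj with hj | hj <;> exact aadj_ne hj (by simp [this])
  · rcases hjj with hj | hj
    · exact Or.inl (rel_inr_inr.mpr ⟨rfl, rfl, Or.inl ⟨rfl, hj⟩⟩)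
    · exact Or.inr (rel_inr_inr.mpr ⟨rfl, rfl, Or.inl ⟨rfl, hj⟩⟩)

lemma adj_chain {a b : V} {i : ℕ} {h h'} :
    (gadgetGraph G x).Adj (Sum.inr ⟨(a,b,i,(5:Fin 6)), h⟩) (Sum.inr ⟨(a,b,i+1,(0:Fin 6)), h'⟩) := by
  refine adj_iff.mpr ⟨?_, Or.inl (rel_inr_inr.mpr ⟨rfl, rfl, Or.inr ⟨rfl, rfl, rfl⟩⟩)⟩
  intro hh
  have : (5:Fin 6) = 0 := by
    have := congrArg (fun u => match u with
      | Sum.inr p => p.1.2.2.2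
      | Sum.inl _ => (0:Fin 6)) hh
    simpa using this
  simp at this

lemma adj_inl_first {a b : V} {h} :
    (gadgetGraph G x).Adj (Sum.inl a) (Sum.inr ⟨(a,b,0,(0:Fin 6)), h⟩) :=
  adj_iff.mpr ⟨by simp, Or.inl (rel_inl_inr.mpr (Or.inl ⟨rfl, rfl, rfl⟩))⟩

lemma adj_inl_last {a b : V} {h} :
    (gadgetGraph G x).Adj (Sum.inl b) (Sum.inr ⟨(a,b,x s(a,b) - 1,(5:Fin 6)), h⟩) :=
  adj_iff.mpr ⟨by simp, Or.inl (rel_inl_inr.mpr (Or.inr ⟨rfl, rfl, rfl⟩))⟩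

/-- Any neighbor of an original vertex is a gadget vertex with the stated shape. -/
lemma neighbor_of_inl {s : V} {w : GadgetVert G x}
    (h : (gadgetGraph G x).Adj (Sum.inl s) w) :
    ∃ a b i j hh, w = Sum.inr ⟨(a,b,i,j), hh⟩ ∧
      ((s = a ∧ i = 0 ∧ j = 0) ∨ (s = b ∧ i = x s(a,b) - 1 ∧ j = 5)) := by
  rcases adj_iff.mp h with ⟨hne, hr | hr⟩
  · match w, hr with
    | Sum.inr ⟨(a,b,i,j), hh⟩, hr =>
      exact ⟨a, b, i, j, hh, rfl, rel_inl_inr.mp hr⟩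
    | Sum.inl t, hr => exact absurd hr rel_inl_inl
  · match w, hr with
    | Sum.inr ⟨(a,b,i,j), hh⟩, hr => exact absurd hr rel_inr_inl
    | Sum.inl t, hr => exact absurd hr rel_inl_inl

/-- Any neighbor of a gadget vertex is one of the two endpoints or a gadget vertex
of the same expanded edge. -/
lemma neighbor_of_inr {a b : V} {i : ℕ} {j : Fin 6} {h} {w : GadgetVert G x}
    (hadj : (gadgetGraph G x).Adj (Sum.inr ⟨(a,b,i,j), h⟩) w) :
    w = Sum.inl a ∨ w = Sum.inl b ∨ ∃ i' j' hh, w = Sum.inr ⟨(a,b,i',j'), hh⟩ := by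
  rcases adj_iff.mp hadj with ⟨hne, hr | hr⟩
  · match w, hr with
    | Sum.inl t, hr => exact absurd hr rel_inr_inl
    | Sum.inr ⟨(a',b',i',j'), hh⟩, hr =>
      obtain ⟨ha, hb, _⟩ := rel_inr_inr.mp hr
      subst ha; subst hb
      exact Or.inr (Or.inr ⟨i', j', hh, rfl⟩)
  · match w, hr with
    | Sum.inl t, hr =>
      rcases rel_inl_inr.mp hr with ⟨h1, _⟩ | ⟨h1, _⟩
      · exact Or.inl (by rw [h1])
      · exact Or.inr (Or.inl (by rw [h1]))
    | Sum.inr ⟨(a',b',i',j'), hh⟩, hr =>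
      obtain ⟨ha, hb, _⟩ := rel_inr_inr.mp hr
      subst ha; subst hb
      exact Or.inr (Or.inr ⟨i', j', hh, rfl⟩)

lemma aadj05 : ∀ j j' : Fin 6, AAdj j j' → ¬((j = 0 ∨ j = 5) ∧ (j' = 0 ∨ j' = 5)) := by
  decide

lemma not_onTriangle_inl (s : V) : ¬ OnTriangle G x (Sum.inl s) := by
  rintro ⟨p, q, h1, h2, h3⟩
  obtain ⟨a, b, i, j, hh, rfl, hC⟩ := neighbor_of_inl h1
  obtain ⟨a', b', i', j', hh', rfl, hC'⟩ := neighbor_of_inl h2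
  rcases adj_iff.mp h3 with ⟨-, hr | hr⟩
  · obtain ⟨rfl, rfl, hcc⟩ := rel_inr_inr.mp hr
    rcases hcc with ⟨hi, hA⟩ | ⟨hi, hj5, hj0⟩
    · exact aadj05 j j' hA ⟨by tauto, by tauto⟩
    · rcases hC with ⟨-, hi0, hj⟩ | ⟨-, hix, hj⟩ <;>
        rcases hC' with ⟨-, hi0', hj'⟩ | ⟨-, hix', hj'⟩ <;> simp_all
  · obtain ⟨rfl, rfl, hcc⟩ := rel_inr_inr.mp hr
    rcases hcc with ⟨hi, hA⟩ | ⟨hi, hj5, hj0⟩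
    · exact aadj05 j' j hA ⟨by tauto, by tauto⟩
    · rcases hC with ⟨-, hi0, hj⟩ | ⟨-, hix, hj⟩ <;>
        rcases hC' with ⟨-, hi0', hj'⟩ | ⟨-, hix', hj'⟩ <;> simp_all

lemma onTriangle_inr (a b : V) (i : ℕ) (j : Fin 6) (h) :
    OnTriangle G x (Sum.inr ⟨(a,b,i,j), h⟩ : GadgetVert G x) := by
  have tri : ∀ j1 j2 j3 : Fin 6, AAdj j1 j2 → AAdj j1 j3 → AAdj j2 j3 →
      (j = j1 ∨ j = j2 ∨ j = j3) → OnTriangle G x (Sum.inr ⟨(a,b,i,j), h⟩ : GadgetVert G x) := by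
    intro j1 j2 j3 h12 h13 h23 hj
    rcases hj with rfl | rfl | rfl
    · exact ⟨Sum.inr ⟨(a,b,i,j2), h⟩, Sum.inr ⟨(a,b,i,j3), h⟩,
        adj_within (Or.inl h12), adj_within (Or.inl h13), adj_within (Or.inl h23)⟩
    · exact ⟨Sum.inr ⟨(a,b,i,j1), h⟩, Sum.inr ⟨(a,b,i,j3), h⟩,
        adj_within (Or.inr h12), adj_within (Or.inl h23), adj_within (Or.inl h13)⟩
    · exact ⟨Sum.inr ⟨(a,b,i,j1), h⟩, Sum.inr ⟨(a,b,i,j2), h⟩,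
        adj_within (Or.inr h13), adj_within (Or.inr h23), adj_within (Or.inl h12)⟩
  rcases (by decide : ∀ jj : Fin 6, (jj = 0 ∨ jj = 1 ∨ jj = 2) ∨ (jj = 3 ∨ jj = 4 ∨ jj = 5)) j
      with hj | hj
  · exact tri 0 1 2 (by decide) (by decide) (by decide) hj
  · exact tri 3 4 5 (by decide) (by decide) (by decide) hj

lemma isOriginal_iff_not_onTriangle (u : GadgetVert G x) :
    IsOriginal G x u ↔ ¬ OnTriangle G x u := by
  constructor
  · rintro ⟨v, rfl⟩; exact not_onTriangle_inl v
  · intro h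
    match u with
    | Sum.inl v => exact ⟨v, rfl⟩
    | Sum.inr ⟨(a,b,i,j), hh⟩ => exact absurd (onTriangle_inr a b i j hh) h

lemma notOrig_inr (p : GadgetAux G x) : ¬ IsOriginal G x (Sum.inr p) := by
  rintro ⟨v, h⟩; exact absurd h (by simp)

/-- `w` is attached to the original vertex `c`: there is a walk from `w` to `inl c`
whose only original vertex is the endpoint `inl c`. -/
def Attached (G : SimpleGraph V) (x : Sym2 V → ℕ) (w : GadgetVert G x) (c : V) : Prop :=
  ∃ p : (gadgetGraph G x).Walk w (Sum.inl c),
    ∀ v ∈ p.support, IsOriginal G x v → v = Sum.inl c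

lemma attached_cases_aux {u z : GadgetVert G x} (p : (gadgetGraph G x).Walk u z) :
    ∀ c : V, z = Sum.inl c →
      (∀ v ∈ p.support, IsOriginal G x v → v = Sum.inl c) →
      ∀ a b i j hh, u = Sum.inr ⟨(a,b,i,j), hh⟩ → c = a ∨ c = b := by
  induction p with
  | nil =>
    intro c hz hs a b i j hh he
    rw [hz] at he
    exact absurd he (by simp)
  | @cons u y z hadj q ih =>
    intro c hz hs a b i j hh he
    subst hz; subst he
    rcases neighbor_of_inr hadj with rfl | rfl | ⟨i', j', hh', rfl⟩
    · left
      have hmem : (Sum.inl a : GadgetVert G x) ∈ (SimpleGraph.Walk.cons hadj q).support := by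
        rw [SimpleGraph.Walk.support_cons]
        exact List.mem_cons_of_mem _ q.start_mem_support
      have := hs _ hmem ⟨a, rfl⟩
      exact (Sum.inl_injective this.symm)
    · right
      have hmem : (Sum.inl b : GadgetVert G x) ∈ (SimpleGraph.Walk.cons hadj q).support := by
        rw [SimpleGraph.Walk.support_cons]
        exact List.mem_cons_of_mem _ q.start_mem_support
      have := hs _ hmem ⟨b, rfl⟩
      exact (Sum.inl_injective this.symm)
    · refine ih c rfl ?_ a b i' j' hh' rfl
      intro v hv
      exact hs v (by rw [SimpleGraph.Walk.support_cons]; exact List.mem_cons_of_mem _ hv)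

lemma attached_mem {a b : V} {i : ℕ} {j : Fin 6} {hh} {c : V}
    (h : Attached G x (Sum.inr ⟨(a,b,i,j), hh⟩) c) : c = a ∨ c = b := by
  obtain ⟨p, hp⟩ := h
  exact attached_cases_aux p c rfl hp a b i j hh rfl

/-- No vertex of the walk is original. -/
def NOW {u v : GadgetVert G x} (p : (gadgetGraph G x).Walk u v) : Prop :=
  ∀ w ∈ p.support, ¬ IsOriginal G x w

lemma now_nil {p : GadgetAux G x} :
    NOW (SimpleGraph.Walk.nil : (gadgetGraph G x).Walk (Sum.inr p) (Sum.inr p)) := by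
  intro w hw
  simp only [SimpleGraph.Walk.support_nil, List.mem_singleton] at hw
  subst hw; exact notOrig_inr p

lemma now_cons {q : GadgetAux G x} {u v : GadgetVert G x}
    (h : (gadgetGraph G x).Adj (Sum.inr q) u) {p : (gadgetGraph G x).Walk u v}
    (hp : NOW p) : NOW (SimpleGraph.Walk.cons h p) := by
  intro w hw
  rw [SimpleGraph.Walk.support_cons, List.mem_cons] at hw
  rcases hw with rfl | hw
  · exact notOrig_inr q
  · exact hp w hw

lemma now_append {u v w : GadgetVert G x} {p : (gadgetGraph G x).Walk u v}
    {q : (gadgetGraph G x).Walk v w} (hp : NOW p) (hq : NOW q) : NOW (p.append q) := by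
  intro z hz
  rcases (SimpleGraph.Walk.mem_support_append_iff _ _).mp hz with hz | hz
  · exact hp z hz
  · exact hq z hz

lemma adjW {a b : V} {i : ℕ} {j j' : Fin 6} (hab : a < b) (hadj : G.Adj a b)
    (hi : i < x s(a,b)) (hjj : AAdj j j' ∨ AAdj j' j) :
    (gadgetGraph G x).Adj (Sum.inr ⟨(a,b,i,j), ⟨hab,hadj,hi⟩⟩)
      (Sum.inr ⟨(a,b,i,j'), ⟨hab,hadj,hi⟩⟩) :=
  adj_within hjj

lemma walk_to_zero {a b : V} (hab : a < b) (hadj : G.Adj a b) {i : ℕ}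
    (hi : i < x s(a,b)) (j : Fin 6) :
    ∃ p : (gadgetGraph G x).Walk (Sum.inr ⟨(a,b,i,j), ⟨hab,hadj,hi⟩⟩)
      (Sum.inr ⟨(a,b,i,0), ⟨hab,hadj,hi⟩⟩), NOW p := by
  fin_cases j
  · exact ⟨.nil, now_nil⟩
  · exact ⟨.cons (adjW hab hadj hi (Or.inr (show AAdj 0 1 by decide))) .nil, now_cons _ now_nil⟩
  · exact ⟨.cons (adjW hab hadj hi (Or.inr (show AAdj 0 2 by decide))) .nil, now_cons _ now_nil⟩
  · exact ⟨.cons (adjW hab hadj hi (Or.inr (show AAdj 1 3 by decide)))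
      (.cons (adjW hab hadj hi (Or.inr (show AAdj 0 1 by decide))) .nil),
      now_cons _ (now_cons _ now_nil)⟩
  · exact ⟨.cons (adjW hab hadj hi (Or.inr (show AAdj 2 4 by decide)))
      (.cons (adjW hab hadj hi (Or.inr (show AAdj 0 2 by decide))) .nil),
      now_cons _ (now_cons _ now_nil)⟩
  · exact ⟨.cons (adjW hab hadj hi (Or.inr (show AAdj 3 5 by decide)))
      (.cons (adjW hab hadj hi (Or.inr (show AAdj 1 3 by decide)))
        (.cons (adjW hab hadj hi (Or.inr (show AAdj 0 1 by decide))) .nil)),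
      now_cons _ (now_cons _ (now_cons _ now_nil))⟩

lemma walk_to_five {a b : V} (hab : a < b) (hadj : G.Adj a b) {i : ℕ}
    (hi : i < x s(a,b)) (j : Fin 6) :
    ∃ p : (gadgetGraph G x).Walk (Sum.inr ⟨(a,b,i,j), ⟨hab,hadj,hi⟩⟩)
      (Sum.inr ⟨(a,b,i,5), ⟨hab,hadj,hi⟩⟩), NOW p := by
  fin_cases j
  · exact ⟨.cons (adjW hab hadj hi (Or.inl (show AAdj 0 1 by decide)))
      (.cons (adjW hab hadj hi (Or.inl (show AAdj 1 3 by decide)))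
        (.cons (adjW hab hadj hi (Or.inl (show AAdj 3 5 by decide))) .nil)),
      now_cons _ (now_cons _ (now_cons _ now_nil))⟩
  · exact ⟨.cons (adjW hab hadj hi (Or.inl (show AAdj 1 3 by decide)))
      (.cons (adjW hab hadj hi (Or.inl (show AAdj 3 5 by decide))) .nil),
      now_cons _ (now_cons _ now_nil)⟩
  · exact ⟨.cons (adjW hab hadj hi (Or.inl (show AAdj 2 4 by decide)))
      (.cons (adjW hab hadj hi (Or.inl (show AAdj 4 5 by decide))) .nil),
      now_cons _ (now_cons _ now_nil)⟩
  · exact ⟨.cons (adjW hab hadj hi (Or.inl (show AAdj 3 5 by decide))) .nil, now_cons _ now_nil⟩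
  · exact ⟨.cons (adjW hab hadj hi (Or.inl (show AAdj 4 5 by decide))) .nil, now_cons _ now_nil⟩
  · exact ⟨.nil, now_nil⟩

lemma walk_down {a b : V} (hab : a < b) (hadj : G.Adj a b) :
    ∀ (i : ℕ) (hi : i < x s(a,b)) (j : Fin 6),
    ∃ p : (gadgetGraph G x).Walk (Sum.inr ⟨(a,b,i,j), ⟨hab,hadj,hi⟩⟩)
      (Sum.inr ⟨(a,b,0,0), ⟨hab,hadj,Nat.lt_of_le_of_lt (Nat.zero_le _) hi⟩⟩), NOW p
  | 0, hi, j => walk_to_zero hab hadj hi j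
  | (i+1), hi, j => by
      obtain ⟨p1, h1⟩ := walk_to_zero hab hadj hi j
      have hi' : i < x s(a,b) := Nat.lt_of_succ_lt hi
      obtain ⟨p2, h2⟩ := walk_down hab hadj i hi' 5
      exact ⟨p1.append (.cons adj_chain.symm p2), now_append h1 (now_cons _ h2)⟩

lemma walk_up {a b : V} (hab : a < b) (hadj : G.Adj a b) :
    ∀ (d i : ℕ) (hi : i < x s(a,b)) (_ : i + d = x s(a,b) - 1) (j : Fin 6),
    ∃ p : (gadgetGraph G x).Walk (Sum.inr ⟨(a,b,i,j), ⟨hab,hadj,hi⟩⟩)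
      (Sum.inr ⟨(a,b,x s(a,b) - 1,5), ⟨hab,hadj,show x s(a,b) - 1 < x s(a,b) by omega⟩⟩), NOW p
  | 0, i, hi, hd, j => by
      obtain ⟨p, hp⟩ := walk_to_five hab hadj hi j
      have hix : i = x s(a,b) - 1 := by omega
      subst hix
      exact ⟨p, hp⟩
  | (d+1), i, hi, hd, j => by
      have hi1 : i + 1 < x s(a,b) := by omega
      obtain ⟨p1, h1⟩ := walk_to_five hab hadj hi j
      obtain ⟨p2, h2⟩ := walk_up hab hadj d (i+1) hi1 (by omega) 0
      exact ⟨p1.append (.cons adj_chain p2), now_append h1 (now_cons _ h2)⟩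

lemma attached_left {a b : V} {i : ℕ} {j : Fin 6} (hab : a < b) (hadj : G.Adj a b)
    (hi : i < x s(a,b)) :
    Attached G x (Sum.inr ⟨(a,b,i,j), ⟨hab,hadj,hi⟩⟩) a := by
  obtain ⟨p, hp⟩ := walk_down hab hadj i hi j
  refine ⟨p.append (.cons adj_inl_first.symm .nil), ?_⟩
  intro v hv hvo
  rcases (SimpleGraph.Walk.mem_support_append_iff _ _).mp hv with hv | hv
  · exact absurd hvo (hp v hv)
  · simp only [SimpleGraph.Walk.support_cons, SimpleGraph.Walk.support_nil,
      List.mem_cons, List.mem_singleton] at hv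
    rcases hv with rfl | rfl | h
    · exact absurd hvo (notOrig_inr _)
    · rfl
    · exact absurd h List.not_mem_nil

lemma attached_right {a b : V} {i : ℕ} {j : Fin 6} (hab : a < b) (hadj : G.Adj a b)
    (hi : i < x s(a,b)) :
    Attached G x (Sum.inr ⟨(a,b,i,j), ⟨hab,hadj,hi⟩⟩) b := by
  obtain ⟨p, hp⟩ := walk_up hab hadj (x s(a,b) - 1 - i) i hi (by omega) j
  refine ⟨p.append (.cons adj_inl_last.symm .nil), ?_⟩
  intro v hv hvo
  rcases (SimpleGraph.Walk.mem_support_append_iff _ _).mp hv with hv | hv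
  · exact absurd hvo (hp v hv)
  · simp only [SimpleGraph.Walk.support_cons, SimpleGraph.Walk.support_nil,
      List.mem_cons, List.mem_singleton] at hv
    rcases hv with rfl | rfl | h
    · exact absurd hvo (notOrig_inr _)
    · rfl
    · exact absurd h List.not_mem_nil

lemma attached_of_inr {a b : V} {i : ℕ} {j : Fin 6} (hh) :
    Attached G x (Sum.inr ⟨(a,b,i,j), hh⟩) a ∧ Attached G x (Sum.inr ⟨(a,b,i,j), hh⟩) b :=
  ⟨attached_left hh.1 hh.2.1 hh.2.2, attached_right hh.1 hh.2.1 hh.2.2⟩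

lemma adj_characterization (hx : ∀ e ∈ G.edgeSet, 0 < x e) (u v : V) :
    G.Adj u v ↔ u ≠ v ∧ ∃ w, ¬ IsOriginal G x w ∧ Attached G x w u ∧ Attached G x w v := by
  constructor
  · intro h
    refine ⟨h.ne, ?_⟩
    rcases lt_trichotomy u v with huv | huv | huv
    · have hpos : 0 < x s(u,v) := hx _ (G.mem_edgeSet.mpr h)
      refine ⟨Sum.inr ⟨(u,v,0,(0:Fin 6)), ⟨huv, h, hpos⟩⟩, notOrig_inr _, ?_, ?_⟩
      · exact attached_left huv h hpos
      · exact attached_right huv h hpos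
    · exact absurd huv h.ne
    · have h' := h.symm
      have hpos : 0 < x s(v,u) := hx _ (G.mem_edgeSet.mpr h')
      refine ⟨Sum.inr ⟨(v,u,0,(0:Fin 6)), ⟨huv, h', hpos⟩⟩, notOrig_inr _, ?_, ?_⟩
      · exact attached_right huv h' hpos
      · exact attached_left huv h' hpos
  · rintro ⟨hne, w, hw, hu, hv⟩
    match w with
    | Sum.inl t => exact absurd ⟨t, rfl⟩ hw
    | Sum.inr ⟨(a,b,i,j), hh⟩ =>
      rcases attached_mem hu with rfl | rfl <;> rcases attached_mem hv with rfl | rfl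
      · exact absurd rfl hne
      · exact hh.2.1
      · exact hh.2.1.symm
      · exact absurd rfl hne

/-- The set of gadget vertices on the expanded edge between `u` and `v`. -/
def ChainSet (G : SimpleGraph V) (x : Sym2 V → ℕ) (u v : V) : Set (GadgetVert G x) :=
  {w | ¬ IsOriginal G x w ∧ Attached G x w u ∧ Attached G x w v}

lemma chainSet_comm (u v : V) : ChainSet G x u v = ChainSet G x v u := by
  ext w; exact ⟨fun ⟨h1,h2,h3⟩ => ⟨h1,h3,h2⟩, fun ⟨h1,h2,h3⟩ => ⟨h1,h3,h2⟩⟩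

lemma chainSet_eq {u v : V} (huv : u < v) (hadj : G.Adj u v) (hpos : 0 < x s(u,v)) :
    ChainSet G x u v = Set.range (fun q : Fin (x s(u,v)) × Fin 6 =>
      (Sum.inr ⟨(u,v,q.1.1,q.2), ⟨huv, hadj, q.1.2⟩⟩ : GadgetVert G x)) := by
  ext w
  constructor
  · rintro ⟨hw, hu, hv⟩
    match w with
    | Sum.inl t => exact absurd ⟨t, rfl⟩ hw
    | Sum.inr ⟨(a,b,i,j), hh⟩ =>
      have h1 := attached_mem hu
      have h2 := attached_mem hv
      have hab : a < b := hh.1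
      have hau : a = u ∧ b = v := by
        rcases h1 with rfl | rfl <;> rcases h2 with rfl | rfl
        · exact absurd rfl huv.ne
        · exact ⟨rfl, rfl⟩
        · exact absurd (hab.trans huv) (lt_irrefl _)
        · exact absurd rfl huv.ne
      obtain ⟨rfl, rfl⟩ := hau
      exact ⟨(⟨i, hh.2.2⟩, j), rfl⟩
  · rintro ⟨⟨⟨i, hi⟩, j⟩, rfl⟩
    exact ⟨notOrig_inr _, attached_left huv hadj hi, attached_right huv hadj hi⟩

lemma chainSet_ncard_lt {u v : V} (huv : u < v) (hadj : G.Adj u v) (hpos : 0 < x s(u,v)) :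
    (ChainSet G x u v).ncard = 6 * x s(u,v) := by
  rw [chainSet_eq huv hadj hpos]
  have hinj : Function.Injective (fun q : Fin (x s(u,v)) × Fin 6 =>
      (Sum.inr ⟨(u,v,q.1.1,q.2), ⟨huv, hadj, q.1.2⟩⟩ : GadgetVert G x)) := by
    rintro ⟨⟨i,hi⟩,j⟩ ⟨⟨i',hi'⟩,j'⟩ h
    simp only [Sum.inr.injEq, Subtype.mk.injEq, Prod.mk.injEq] at h
    obtain ⟨-, -, h1, h2⟩ := h
    simp only [Prod.mk.injEq, Fin.mk.injEq]
    exact ⟨h1, h2⟩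
  rw [← Nat.card_coe_set_eq, Nat.card_range_of_injective hinj]
  simp only [Nat.card_eq_fintype_card, Fintype.card_prod, Fintype.card_fin]
  omega

lemma chainSet_ncard {u v : V} (hadj : G.Adj u v) (hx : ∀ e ∈ G.edgeSet, 0 < x e) :
    (ChainSet G x u v).ncard = 6 * x s(u,v) := by
  rcases lt_trichotomy u v with huv | huv | huv
  · exact chainSet_ncard_lt huv hadj (hx _ (G.mem_edgeSet.mpr hadj))
  · exact absurd huv hadj.ne
  · rw [chainSet_comm, Sym2.eq_swap]
    exact chainSet_ncard_lt huv hadj.symm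
      (hx _ (G.mem_edgeSet.mpr hadj.symm))

section Iso
variable {V₁ V₂ : Type} [LinearOrder V₁] [LinearOrder V₂]
  {G₁ : SimpleGraph V₁} {G₂ : SimpleGraph V₂} {x₁ : Sym2 V₁ → ℕ} {x₂ : Sym2 V₂ → ℕ}

lemma iso_onTriangle (Φ : gadgetGraph G₁ x₁ ≃g gadgetGraph G₂ x₂) {u}
    (h : OnTriangle G₁ x₁ u) : OnTriangle G₂ x₂ (Φ u) := by
  obtain ⟨a, b, h1, h2, h3⟩ := h
  exact ⟨Φ a, Φ b, Φ.map_adj_iff.mpr h1, Φ.map_adj_iff.mpr h2, Φ.map_adj_iff.mpr h3⟩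

lemma iso_original (Φ : gadgetGraph G₁ x₁ ≃g gadgetGraph G₂ x₂) (u) :
    IsOriginal G₁ x₁ u ↔ IsOriginal G₂ x₂ (Φ u) := by
  rw [isOriginal_iff_not_onTriangle, isOriginal_iff_not_onTriangle]
  constructor
  · intro h ht
    refine h ?_
    have := iso_onTriangle Φ.symm ht
    rwa [Φ.symm_apply_apply] at this
  · exact fun h ht => h (iso_onTriangle Φ ht)

lemma iso_attached (Φ : gadgetGraph G₁ x₁ ≃g gadgetGraph G₂ x₂) {w : GadgetVert G₁ x₁}
    {c : V₁} {c' : V₂} (hc : Φ (Sum.inl c) = Sum.inl c')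
    (h : Attached G₁ x₁ w c) : Attached G₂ x₂ (Φ w) c' := by
  obtain ⟨p, hp⟩ := h
  refine ⟨(p.map Φ.toHom).copy rfl hc, ?_⟩
  intro v hv hvo
  rw [SimpleGraph.Walk.support_copy, SimpleGraph.Walk.support_map, List.mem_map] at hv
  obtain ⟨v0, hv0, rfl⟩ := hv
  have hv0o : IsOriginal G₁ x₁ v0 := (iso_original Φ v0).mpr hvo
  have := hp v0 hv0 hv0o
  rw [this]
  exact hc

end Iso

theorem stmt9 {V₁ V₂ : Type} [LinearOrder V₁] [LinearOrder V₂]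
    (G₁ : SimpleGraph V₁) (G₂ : SimpleGraph V₂)
    (k : ℕ) (hk : 1 ≤ k)
    (x₁ : Sym2 V₁ → ℕ) (x₂ : Sym2 V₂ → ℕ)
    (hreg₁ : ThreeRegular G₁) (hreg₂ : ThreeRegular G₂)
    (hx₁ : ∀ e ∈ G₁.edgeSet, x₁ e ∈ Finset.Icc 1 k)
    (hx₂ : ∀ e ∈ G₂.edgeSet, x₂ e ∈ Finset.Icc 1 k)
    (hiso : Nonempty (gadgetGraph G₁ x₁ ≃g gadgetGraph G₂ x₂)) :
    ∃ φ : G₁ ≃g G₂, ∀ u v : V₁, G₁.Adj u v → x₂ s(φ u, φ v) = x₁ s(u, v) := by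
  obtain ⟨Φ⟩ := hiso
  have hp₁ : ∀ e ∈ G₁.edgeSet, 0 < x₁ e := fun e he => (Finset.mem_Icc.mp (hx₁ e he)).1
  have hp₂ : ∀ e ∈ G₂.edgeSet, 0 < x₂ e := fun e he => (Finset.mem_Icc.mp (hx₂ e he)).1
  have hforig : ∀ v : V₁, ∃ w, Φ (Sum.inl v) = Sum.inl w := by
    intro v
    exact (iso_original Φ (Sum.inl v)).mp ⟨v, rfl⟩
  choose f hf using hforig
  have hgorig : ∀ v : V₂, ∃ w, Φ.symm (Sum.inl v) = Sum.inl w := by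
    intro v
    exact (iso_original Φ.symm (Sum.inl v)).mp ⟨v, rfl⟩
  choose g hg using hgorig
  have hgf : ∀ v, g (f v) = v := by
    intro v
    have h1 : Φ.symm (Sum.inl (f v)) = Sum.inl v := by
      rw [← hf v, Φ.symm_apply_apply]
    exact Sum.inl_injective ((hg (f v)).symm.trans h1)
  have hfg : ∀ v, f (g v) = v := by
    intro v
    have h1 : Φ (Sum.inl (g v)) = Sum.inl v := by
      rw [← hg v, Φ.apply_symm_apply]
    exact Sum.inl_injective ((hf (g v)).symm.trans h1)
  have hsymm_f : ∀ u : V₁, Φ.symm (Sum.inl (f u)) = Sum.inl u := by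
    intro u; rw [← hf u, Φ.symm_apply_apply]
  have key : ∀ u v : V₁, G₁.Adj u v ↔ G₂.Adj (f u) (f v) := by
    intro u v
    rw [adj_characterization hp₁, adj_characterization hp₂]
    constructor
    · rintro ⟨hne, w, hw, hu, hv⟩
      refine ⟨fun he => hne (by rw [← hgf u, he, hgf v]), Φ w, ?_,
        iso_attached Φ (hf u) hu, iso_attached Φ (hf v) hv⟩
      intro ho
      exact hw ((iso_original Φ w).mpr ho)
    · rintro ⟨hne, w, hw, hu, hv⟩
      refine ⟨fun he => hne (congrArg f he), Φ.symm w, ?_,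
        iso_attached Φ.symm (hsymm_f u) hu, iso_attached Φ.symm (hsymm_f v) hv⟩
      intro ho
      exact hw ((iso_original Φ.symm w).mpr ho)
  refine ⟨⟨Equiv.mk f g hgf hfg, @fun a b => (key a b).symm⟩, ?_⟩
  intro u v huv
  show x₂ s(f u, f v) = x₁ s(u, v)
  have h1 : (ChainSet G₁ x₁ u v).ncard = 6 * x₁ s(u,v) := chainSet_ncard huv hp₁
  have h4 : (ChainSet G₂ x₂ (f u) (f v)).ncard = 6 * x₂ s(f u, f v) :=
    chainSet_ncard ((key u v).mp huv) hp₂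
  have h2 : ChainSet G₂ x₂ (f u) (f v) = Φ '' ChainSet G₁ x₁ u v := by
    ext w
    constructor
    · rintro ⟨hw, hwu, hwv⟩
      refine ⟨Φ.symm w, ⟨?_, iso_attached Φ.symm (hsymm_f u) hwu,
        iso_attached Φ.symm (hsymm_f v) hwv⟩, Φ.apply_symm_apply w⟩
      intro ho
      exact hw ((iso_original Φ.symm w).mpr ho)
    · rintro ⟨w0, ⟨hw0, hu0, hv0⟩, rfl⟩
      refine ⟨fun ho => hw0 ((iso_original Φ w0).mpr ho),
        iso_attached Φ (hf u) hu0, iso_attached Φ (hf v) hv0⟩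
  have h3 : (ChainSet G₂ x₂ (f u) (f v)).ncard = (ChainSet G₁ x₁ u v).ncard := by
    rw [h2]
    exact Set.ncard_image_of_injective _ Φ.toEquiv.injective
  omega

end LCLGadgetThms
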